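/- Let n ≥ 4 and b ≥ 2 be integers, and let R[N ∪ {c}] be the principal submatrix of R(T_n^{(b)}) on the (n-3)b non-base vertices together with the cut vertex c. Then the characteristic polynomial of R[N ∪ {c}] equals (x - (2n-9)b)^{b-1} · (x - (n-6)b)^{(n-4)b} · p(x), where p(x) = x^2 + (n-6)·[(n-5)(b-1)^2 + (n-4)b]·x + b(n-6)^2·[(n-4)(n-5)(b-1)^2 - (n-3)b^2]. -/

import Mathlib

open Polynomial Matrix Finset

namespace CharRncAux

noncomputable def Pmat (K : ℕ) [NeZero K] : Matrix (Fin K) (Fin K) ℝ :=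
  Matrix.of fun i j =>
    if j = 0 then 1 else (if i = j then (1:ℝ) else 0) - (if i = 0 then 1 else 0)

noncomputable def Pinv (K : ℕ) [NeZero K] : Matrix (Fin K) (Fin K) ℝ :=
  Matrix.of fun i j =>
    if i = 0 then (K:ℝ)⁻¹ else (if i = j then (1:ℝ) else 0) - (K:ℝ)⁻¹

variable {K : ℕ} [NeZero K]

lemma Pmat_apply_zero (i : Fin K) : Pmat K i 0 = 1 := by simp [Pmat]

lemma Pmat_colsum (j : Fin K) :
    ∑ i, Pmat K i j = if j = 0 then (K:ℝ) else 0 := by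
  rcases eq_or_ne j 0 with hj | hj
  · subst hj; simp [Pmat]
  · simp only [Pmat, of_apply, if_neg hj]
    rw [Finset.sum_sub_distrib]
    simp [hj]

lemma Pmat_mul_Pinv : Pmat K * Pinv K = 1 := by
  have hK : (K:ℝ) ≠ 0 := Nat.cast_ne_zero.2 (NeZero.ne K)
  ext i l
  rw [Matrix.mul_apply]
  rcases eq_or_ne i 0 with hi | hi
  · subst hi
    rcases eq_or_ne l 0 with hl | hl
    · subst hl
      have : ∀ j : Fin K, Pmat K 0 j * Pinv K j 0 = (K:ℝ)⁻¹ := by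
        intro j
        rcases eq_or_ne j 0 with hj | hj
        · subst hj; simp [Pmat, Pinv]
        · simp [Pmat, Pinv, hj, Ne.symm hj]
      rw [Finset.sum_congr rfl fun j _ => this j]
      simp [Finset.card_univ, hK, Matrix.one_apply]
    · have : ∀ j : Fin K, Pmat K 0 j * Pinv K j l
          = (K:ℝ)⁻¹ - (if j = l then 1 else 0) := by
        intro j
        rcases eq_or_ne j 0 with hj | hj
        · subst hj; simp [Pmat, Pinv, (Ne.symm hl)]
        · simp only [Pmat, Pinv, of_apply, if_neg hj]
          rcases eq_or_ne j l with hjl | hjl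
          · subst hjl; simp [Ne.symm hj, hj, Ne.symm hl]
          · simp [hjl, hj, Ne.symm hj, Ne.symm hl]
      rw [Finset.sum_congr rfl fun j _ => this j]
      rw [Finset.sum_sub_distrib]
      simp [Finset.card_univ, hK, Matrix.one_apply, Ne.symm hl]
  · rcases eq_or_ne l 0 with hl | hl
    · subst hl
      have : ∀ j : Fin K, Pmat K i j * Pinv K j 0
          = (if j = 0 then (K:ℝ)⁻¹ else 0) - (if j = i then (K:ℝ)⁻¹ else 0) := by
        intro j
        rcases eq_or_ne j 0 with hj | hj
        · subst hj; simp [Pmat, Pinv, Ne.symm hi]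
        · simp only [Pmat, Pinv, of_apply, if_neg hj]
          rcases eq_or_ne j i with hji | hji
          · subst hji; simp [hj, hi]
          · simp [hj, hji, hi, Ne.symm hji]
      rw [Finset.sum_congr rfl fun j _ => this j]
      rw [Finset.sum_sub_distrib]
      simp [Matrix.one_apply, hi]
    · have : ∀ j : Fin K, Pmat K i j * Pinv K j l
          = (if j = 0 then (K:ℝ)⁻¹ else 0)
            + (if j = i then (if i = l then 1 else 0) - (K:ℝ)⁻¹ else 0) := by
        intro j
        rcases eq_or_ne j 0 with hj | hj
        · subst hj; simp [Pmat, Pinv, Ne.symm hi]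
        · simp only [Pmat, Pinv, of_apply, if_neg hj]
          rcases eq_or_ne j i with hji | hji
          · subst hji; simp [hj, Ne.symm hj, hi]
          · simp [hji, Ne.symm hji, hi]
      rw [Finset.sum_congr rfl fun j _ => this j]
      rw [Finset.sum_add_distrib]
      simp [Matrix.one_apply]

lemma Pinv_mul_Pmat : Pinv K * Pmat K = 1 := by
  have hK : (K:ℝ) ≠ 0 := Nat.cast_ne_zero.2 (NeZero.ne K)
  ext i l
  rw [Matrix.mul_apply]
  rcases eq_or_ne i 0 with hi | hi
  · subst hi
    have : ∀ j : Fin K, Pinv K 0 j * Pmat K j l = (K:ℝ)⁻¹ * Pmat K j l := by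
      intro j; simp [Pinv]
    rw [Finset.sum_congr rfl fun j _ => this j, ← Finset.mul_sum, Pmat_colsum]
    rcases eq_or_ne l 0 with hl | hl <;> simp [hl, hK, Matrix.one_apply, Ne.symm]
  · have : ∀ j : Fin K, Pinv K i j * Pmat K j l
        = (if j = i then Pmat K i l else 0) - (K:ℝ)⁻¹ * Pmat K j l := by
      intro j
      rcases eq_or_ne j i with hji | hji
      · subst hji; simp [Pinv, hi]; ring
      · simp [Pinv, Ne.symm hji, hji, hi]
    rw [Finset.sum_congr rfl fun j _ => this j, Finset.sum_sub_distrib, ← Finset.mul_sum,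
      Pmat_colsum]
    rcases eq_or_ne l 0 with hl | hl
    · subst hl; simp [Pmat_apply_zero, hK, Matrix.one_apply, hi]
    · simp only [if_neg hl, mul_zero, sub_zero, Finset.sum_ite_eq' Finset.univ i,
        Finset.mem_univ, if_true]
      simp [Pmat, hl, hi, Matrix.one_apply]

section W

variable (b m : ℕ) [NeZero b] [NeZero m]

noncomputable def Wmat : Matrix (Fin b × Fin m) (Fin b × Fin m) ℝ :=
  Matrix.of fun p q => Pmat b p.1 q.1 * Pmat m p.2 q.2

noncomputable def Winv : Matrix (Fin b × Fin m) (Fin b × Fin m) ℝ :=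
  Matrix.of fun p q => Pinv b p.1 q.1 * Pinv m p.2 q.2

lemma Wmat_mul_Winv : Wmat b m * Winv b m = 1 := by
  ext p q
  rw [Matrix.mul_apply, Fintype.sum_prod_type]
  have h : ∀ r1 : Fin b, ∀ r2 : Fin m,
      Wmat b m p (r1, r2) * Winv b m (r1, r2) q
        = (Pmat b p.1 r1 * Pinv b r1 q.1) * (Pmat m p.2 r2 * Pinv m r2 q.2) := by
    intro r1 r2; simp only [Wmat, Winv, of_apply]; ring
  simp only [h]
  rw [← Finset.sum_mul_sum, ← Matrix.mul_apply, ← Matrix.mul_apply,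
    Pmat_mul_Pinv, Pmat_mul_Pinv]
  simp only [Matrix.one_apply, Prod.ext_iff]
  split_ifs <;> simp_all

lemma Winv_mul_Wmat : Winv b m * Wmat b m = 1 := by
  ext p q
  rw [Matrix.mul_apply, Fintype.sum_prod_type]
  have h : ∀ r1 : Fin b, ∀ r2 : Fin m,
      Winv b m p (r1, r2) * Wmat b m (r1, r2) q
        = (Pinv b p.1 r1 * Pmat b r1 q.1) * (Pinv m p.2 r2 * Pmat m r2 q.2) := by
    intro r1 r2; simp only [Wmat, Winv, of_apply]; ring
  simp only [h]
  rw [← Finset.sum_mul_sum, ← Matrix.mul_apply, ← Matrix.mul_apply,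
    Pinv_mul_Pmat, Pinv_mul_Pmat]
  simp only [Matrix.one_apply, Prod.ext_iff]
  split_ifs <;> simp_all

noncomputable def Qmat : Matrix ((Fin b × Fin m) ⊕ Unit) ((Fin b × Fin m) ⊕ Unit) ℝ :=
  Matrix.fromBlocks (Wmat b m) 0 0 1

noncomputable def Qinv : Matrix ((Fin b × Fin m) ⊕ Unit) ((Fin b × Fin m) ⊕ Unit) ℝ :=
  Matrix.fromBlocks (Winv b m) 0 0 1

lemma Qmat_mul_Qinv : Qmat b m * Qinv b m = 1 := by
  rw [Qmat, Qinv, Matrix.fromBlocks_multiply]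
  simp [Wmat_mul_Winv, Matrix.fromBlocks_one]

lemma Qinv_mul_Qmat : Qinv b m * Qmat b m = 1 := by
  rw [Qmat, Qinv, Matrix.fromBlocks_multiply]
  simp [Winv_mul_Wmat, Matrix.fromBlocks_one]

end W

section MD

variable (b m : ℕ) [NeZero b] [NeZero m] (lam1 bb tt β v gam : ℝ)

noncomputable def Mgen : Matrix ((Fin b × Fin m) ⊕ Unit) ((Fin b × Fin m) ⊕ Unit) ℝ :=
  Matrix.fromBlocks
    (Matrix.of fun p q =>
      lam1 * (if p = q then 1 else 0) + bb * (if p.1 = q.1 then 1 else 0) + tt)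
    (Matrix.of fun _ _ => β) (Matrix.of fun _ _ => v) (Matrix.of fun _ _ => gam)

noncomputable def Dgen : Matrix ((Fin b × Fin m) ⊕ Unit) ((Fin b × Fin m) ⊕ Unit) ℝ :=
  Matrix.fromBlocks
    (Matrix.diagonal fun p =>
      if p.2 = 0 then (if p.1 = 0 then lam1 + bb*m + tt*b*m else lam1 + bb*m) else lam1)
    (Matrix.of fun p _ => if p = ((0:Fin b),(0:Fin m)) then β else 0)
    (Matrix.of fun _ p => if p = ((0:Fin b),(0:Fin m)) then v*b*m else 0)
    (Matrix.of fun _ _ => gam)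

lemma Mgen_mul_Qmat :
    Mgen b m lam1 bb tt β v gam * Qmat b m = Qmat b m * Dgen b m lam1 bb tt β v gam := by
  rw [Mgen, Qmat, Dgen, Matrix.fromBlocks_multiply, Matrix.fromBlocks_multiply]
  simp only [Matrix.mul_zero, Matrix.zero_mul, add_zero, zero_add, Matrix.mul_one,
    Matrix.one_mul]
  rw [Matrix.fromBlocks_inj]
  refine ⟨?_, ?_, ?_, rfl⟩
  -- block 1,1
  · ext p q
    rw [Matrix.mul_apply, Matrix.mul_diagonal]
    have h : ∀ r : Fin b × Fin m,
        (Matrix.of fun p q =>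
          lam1 * (if p = q then 1 else 0) + bb * (if p.1 = q.1 then 1 else 0) + tt) p r
          * Wmat b m r q
        = lam1 * (if p = r then Pmat b r.1 q.1 * Pmat m r.2 q.2 else 0)
          + bb * ((if p.1 = r.1 then Pmat b r.1 q.1 else 0) * Pmat m r.2 q.2)
          + tt * (Pmat b r.1 q.1 * Pmat m r.2 q.2) := by
      intro r
      simp only [Wmat, of_apply]
      split_ifs <;> ring
    rw [Finset.sum_congr rfl fun r _ => h r]
    rw [Finset.sum_add_distrib, Finset.sum_add_distrib, ← Finset.mul_sum, ← Finset.mul_sum,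
      ← Finset.mul_sum]
    rw [Finset.sum_ite_eq Finset.univ p _]
    rw [Fintype.sum_prod_type]
    have h2 : ∀ r1 : Fin b, ∑ r2 : Fin m,
        (if p.1 = r1 then Pmat b r1 q.1 else 0) * Pmat m r2 q.2
        = (if p.1 = r1 then Pmat b r1 q.1 else 0) * (if q.2 = 0 then (m:ℝ) else 0) := by
      intro r1; rw [← Finset.mul_sum, Pmat_colsum]
    rw [Finset.sum_congr rfl fun r1 _ => h2 r1, ← Finset.sum_mul,
      Finset.sum_ite_eq Finset.univ p.1 _]
    have h3 : ∑ r : Fin b × Fin m, Pmat b r.1 q.1 * Pmat m r.2 q.2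
        = (if q.1 = 0 then (b:ℝ) else 0) * (if q.2 = 0 then (m:ℝ) else 0) := by
      rw [Fintype.sum_prod_type]
      dsimp only
      rw [← Finset.sum_mul_sum, Pmat_colsum, Pmat_colsum]
    rw [h3]
    simp only [Finset.mem_univ, if_true, Wmat, of_apply]
    rcases eq_or_ne q.2 0 with hq2 | hq2
    · rcases eq_or_ne q.1 0 with hq1 | hq1
      · simp only [hq1, hq2, if_true, Pmat_apply_zero]; ring
      · simp only [hq2, if_neg hq1, if_true, Pmat_apply_zero]; ring
    · simp only [if_neg hq2]; ring
  -- block 1,2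
  · ext p u
    rw [Matrix.mul_apply]
    have h : ∀ r : Fin b × Fin m,
        Wmat b m p r * (Matrix.of fun (p : Fin b × Fin m) (_ : Unit) =>
          if p = ((0:Fin b),(0:Fin m)) then β else 0) r u
        = if r = ((0:Fin b),(0:Fin m)) then Wmat b m p r * β else 0 := by
      intro r; simp only [of_apply]; split_ifs <;> simp
    rw [Finset.sum_congr rfl fun r _ => h r, Finset.sum_ite_eq' Finset.univ _ _]
    simp [Wmat, Pmat_apply_zero]
  -- block 2,1
  · ext u q
    rw [Matrix.mul_apply]
    have h : ∀ r : Fin b × Fin m,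
        (Matrix.of fun (_ : Unit) (_ : Fin b × Fin m) => v) u r * Wmat b m r q
        = v * (Pmat b r.1 q.1 * Pmat m r.2 q.2) := by
      intro r; simp [Wmat]
    rw [Finset.sum_congr rfl fun r _ => h r, ← Finset.mul_sum]
    rw [Fintype.sum_prod_type]
    dsimp only
    rw [← Finset.sum_mul_sum, Pmat_colsum, Pmat_colsum]
    simp only [of_apply, Prod.ext_iff]
    by_cases h1 : q.1 = 0 <;> by_cases h2' : q.2 = 0 <;> simp [h1, h2'] <;> ring

end MD

lemma charpoly_similar {σ : Type*} [Fintype σ] [DecidableEq σ]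
    (M D Q Qi : Matrix σ σ ℝ) (h1 : Q * Qi = 1) (h : M * Q = Q * D) :
    M.charpoly = D.charpoly := by
  have key : charmatrix M * Q.map C = Q.map C * charmatrix D := by
    unfold charmatrix
    rw [sub_mul, mul_sub]
    congr 1
    · exact (Matrix.scalar_commute (X : ℝ[X]) (fun r => Commute.all _ _) (Q.map C)).eq
    · rw [RingHom.mapMatrix_apply, RingHom.mapMatrix_apply, ← Matrix.map_mul, h, Matrix.map_mul]
  have hdet : (Q.map (C : ℝ →+* ℝ[X])).det * (Qi.map (C : ℝ →+* ℝ[X])).det = 1 := by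
    rw [← Matrix.det_mul, ← Matrix.map_mul, h1]
    simp
  have hQ : (Q.map (C : ℝ →+* ℝ[X])).det ≠ 0 := by
    intro hz; rw [hz, zero_mul] at hdet; exact zero_ne_one hdet
  have h2 := congrArg Matrix.det key
  rw [Matrix.det_mul, Matrix.det_mul] at h2
  exact mul_right_cancel₀ hQ (h2.trans (mul_comm _ _))

lemma prod_fin_ite {R : Type*} [CommRing R] (m : ℕ) [NeZero m] (x y : R) :
    (∏ i : Fin m, (if i = 0 then x else y)) = x * y ^ (m - 1) := by
  rw [← Finset.mul_prod_erase Finset.univ _ (Finset.mem_univ (0 : Fin m))]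
  simp only [if_pos rfl]
  congr 1
  rw [Finset.prod_congr rfl (fun i hi => if_neg (Finset.mem_erase.1 hi).1),
    Finset.prod_const, Finset.card_erase_of_mem (Finset.mem_univ _), Finset.card_univ,
    Fintype.card_fin]

lemma charpoly_Dgen (b m : ℕ) [NeZero b] [NeZero m] (lam1 bb tt β v gam : ℝ) :
    (Dgen b m lam1 bb tt β v gam).charpoly
      = (X - C (lam1 + bb*m)) ^ (b-1) * (X - C lam1) ^ ((m-1)*b)
        * ((X - C (lam1 + bb*m + tt*b*m)) * (X - C gam) - C (β * (v*(b:ℝ)*m))) := by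
  set K := RatFunc ℝ
  set φ := algebraMap ℝ[X] K with hφ
  have hinj : Function.Injective φ := RatFunc.algebraMap_injective ℝ
  apply hinj
  set t : K := φ X with ht
  set c : ℝ → K := fun r => φ (C r) with hc
  have hden : t - c gam ≠ 0 := by
    intro hcontra
    have : φ ((X : ℝ[X]) - C gam) = φ 0 := by
      rw [map_sub, map_zero]; exact hcontra
    exact X_sub_C_ne_zero gam (hinj this)
  -- the mapped charmatrix as blocks
  set dg : Fin b × Fin m → ℝ := fun p =>
    if p.2 = 0 then (if p.1 = 0 then lam1 + bb*m + tt*b*m else lam1 + bb*m) else lam1 with hdg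
  set A : Matrix (Fin b × Fin m) (Fin b × Fin m) K :=
    Matrix.diagonal (fun p => t - c (dg p)) with hA
  set B : Matrix (Fin b × Fin m) Unit K :=
    Matrix.of (fun p _ => if p = ((0:Fin b),(0:Fin m)) then -c β else 0) with hB
  set Cm : Matrix Unit (Fin b × Fin m) K :=
    Matrix.of (fun _ p => if p = ((0:Fin b),(0:Fin m)) then -c (v*b*m) else 0) with hCm
  set Dd : Matrix Unit Unit K := Matrix.of (fun _ _ => t - c gam) with hDd
  have hmap : (charmatrix (Dgen b m lam1 bb tt β v gam)).map φ = Matrix.fromBlocks A B Cm Dd := by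
    rw [Dgen, charmatrix_fromBlocks]
    ext i j
    rcases i with p | u <;> rcases j with q | u'
    · rcases eq_or_ne p q with hpq | hpq
      · subst hpq
        simp [hA, charmatrix_apply_eq, Matrix.diagonal_apply_eq, map_sub, ht, hc, hdg]
      · simp [Matrix.map_apply, charmatrix_apply_ne _ _ _ hpq,
          Matrix.diagonal_apply_ne _ hpq, hA, hpq]
    · simp only [Matrix.fromBlocks_apply₁₂, Matrix.map_apply, Matrix.neg_apply, of_apply, hB]
      split_ifs <;> simp [hc]
    · simp only [Matrix.fromBlocks_apply₂₁, Matrix.map_apply, Matrix.neg_apply, of_apply, hCm]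
      split_ifs <;> simp [hc]
    · simp [charmatrix_apply_eq, ht, hc, hDd, map_sub]
  have hdet : φ (Dgen b m lam1 bb tt β v gam).charpoly = (Matrix.fromBlocks A B Cm Dd).det := by
    rw [Matrix.charpoly, ← hmap]
    exact RingHom.map_det φ _
  -- invertibility of the 1×1 block
  have hDdet : Dd.det = t - c gam := Matrix.det_unique Dd
  haveI : Invertible Dd.det := by rw [hDdet]; exact invertibleOfNonzero hden
  haveI : Invertible Dd := Dd.invertibleOfDetInvertible
  have hDinv : ⅟ Dd = Matrix.of (fun _ _ => (t - c gam)⁻¹) := by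
    rw [Matrix.invOf_eq_nonsing_inv, Matrix.inv_def, Matrix.adjugate_subsingleton, hDdet]
    ext i j
    simp [Matrix.smul_apply, Matrix.one_apply, Ring.inverse_eq_inv']
    exact Ring.inverse_eq_inv (G₀ := RatFunc ℝ) _
  have hBC : A - B * ⅟ Dd * Cm = Matrix.diagonal (fun p =>
      if p = ((0:Fin b),(0:Fin m)) then
        t - c (lam1 + bb*m + tt*b*m) - c β * c (v*b*m) * (t - c gam)⁻¹
      else t - c (dg p)) := by
    rw [hDinv, hA]
    ext p q
    rw [Matrix.sub_apply]
    have hent : (B * Matrix.of (fun (_ : Unit) (_ : Unit) => (t - c gam)⁻¹) * Cm) p q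
        = (if p = ((0:Fin b),(0:Fin m)) then -c β else 0) * (t - c gam)⁻¹
          * (if q = ((0:Fin b),(0:Fin m)) then -c (v*(b:ℝ)*m) else 0) := by
      rw [Matrix.mul_apply, Fintype.sum_unique, Matrix.mul_apply, Fintype.sum_unique]
      simp [hB, hCm]
    rw [hent]
    rcases eq_or_ne p q with hpq | hpq
    · subst hpq
      rw [Matrix.diagonal_apply_eq, Matrix.diagonal_apply_eq]
      rcases eq_or_ne p ((0:Fin b),(0:Fin m)) with h0 | h0
      · rw [if_pos h0, if_pos h0, if_pos h0]
        have hdgp : dg p = lam1 + bb*m + tt*b*m := by rw [h0]; simp [hdg]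
        rw [hdgp]
        ring
      · rw [if_neg h0, if_neg h0, if_neg h0]
        ring
    · rw [Matrix.diagonal_apply_ne _ hpq, Matrix.diagonal_apply_ne _ hpq]
      rcases eq_or_ne p ((0:Fin b),(0:Fin m)) with h0 | h0
      · have hq0 : q ≠ ((0:Fin b),(0:Fin m)) := by rw [← h0]; exact (Ne.symm hpq)
        rw [if_neg hq0]
        simp
      · rw [if_neg h0]
        simp
  rw [hdet, Matrix.det_fromBlocks₂₂, hBC, hDdet, Matrix.det_diagonal]
  -- compute the product of the diagonal
  have hprod : (∏ p : Fin b × Fin m,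
      (if p = ((0:Fin b),(0:Fin m)) then
        t - c (lam1 + bb*m + tt*b*m) - c β * c (v*b*m) * (t - c gam)⁻¹
      else t - c (dg p)))
      = (t - c (lam1 + bb*m + tt*b*m) - c β * c (v*b*m) * (t - c gam)⁻¹)
        * (t - c (lam1 + bb*m)) ^ (b-1) * ((t - c lam1) ^ ((m-1)*b)) := by
    have hptwise : ∀ p : Fin b × Fin m,
        (if p = ((0:Fin b),(0:Fin m)) then
          t - c (lam1 + bb*m + tt*b*m) - c β * c (v*b*m) * (t - c gam)⁻¹
        else t - c (dg p))
        = if p.2 = 0 then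
            (if p.1 = 0 then
              t - c (lam1 + bb*m + tt*b*m) - c β * c (v*b*m) * (t - c gam)⁻¹
            else t - c (lam1 + bb*m))
          else t - c lam1 := by
      intro p
      rcases eq_or_ne p.2 0 with h2 | h2
      · rcases eq_or_ne p.1 0 with h1 | h1
        · have : p = ((0:Fin b),(0:Fin m)) := Prod.ext h1 h2
          simp [this]
        · have hp : p ≠ ((0:Fin b),(0:Fin m)) := by
            intro hcon; exact h1 (by rw [hcon])
          have hp0 : p ≠ 0 := by
            intro hcon; exact h1 (by rw [hcon]; rfl)
          simp [hp, hp0, h1, h2, hdg]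
      · have hp : p ≠ ((0:Fin b),(0:Fin m)) := by
          intro hcon; exact h2 (by rw [hcon])
        have hp0 : p ≠ 0 := by
          intro hcon; exact h2 (by rw [hcon]; rfl)
        simp [hp, hp0, h2, hdg]
    rw [Finset.prod_congr rfl (fun p _ => hptwise p)]
    rw [Fintype.prod_prod_type]
    have hinner : ∀ x : Fin b, (∏ y : Fin m,
        (if y = 0 then
          (if x = 0 then
            t - c (lam1 + bb*m + tt*b*m) - c β * c (v*b*m) * (t - c gam)⁻¹
          else t - c (lam1 + bb*m))
        else t - c lam1))
        = (if x = 0 then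
            t - c (lam1 + bb*m + tt*b*m) - c β * c (v*b*m) * (t - c gam)⁻¹
          else t - c (lam1 + bb*m)) * (t - c lam1) ^ (m-1) := by
      intro x; exact prod_fin_ite m _ _
    rw [Finset.prod_congr rfl (fun x _ => hinner x), Finset.prod_mul_distrib,
      Finset.prod_const, prod_fin_ite, Finset.card_univ, Fintype.card_fin,
      ← pow_mul]
  rw [hprod]
  -- final algebraic identity
  have hfinal : (t - c gam) * ((t - c (lam1 + bb*m + tt*b*m) - c β * c (v*b*m) * (t - c gam)⁻¹)
        * (t - c (lam1 + bb*m)) ^ (b-1) * ((t - c lam1) ^ ((m-1)*b)))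
      = (t - c (lam1 + bb*m)) ^ (b-1) * (t - c lam1) ^ ((m-1)*b)
        * ((t - c (lam1 + bb*m + tt*b*m)) * (t - c gam) - c β * c (v*b*m)) := by
    linear_combination (-(c β * c (v*b*m)) * (t - c (lam1 + bb*m)) ^ (b-1)
      * (t - c lam1) ^ ((m-1)*b)) * mul_inv_cancel₀ (G₀ := RatFunc ℝ) hden
  rw [hfinal]
  simp only [hc, ht, _root_.map_mul, _root_.map_pow, map_sub, map_add, map_neg]

end CharRncAux

open CharRncAux

/-- Let `n ≥ 4`, `b ≥ 2`, and let `RNc` be the principal submatrix of `R(T_n^(b))` on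
the `(n-3)b` non-base vertices together with the cut vertex `c` (indexed by
`(Fin b × Fin (n-3)) ⊕ Unit`). Then its characteristic polynomial is
`(x - (2n-9)b)^(b-1) * (x - (n-6)b)^((n-4)b) * p(x)` where
`p(x) = x² + (n-6)[(n-5)(b-1)² + (n-4)b]x + b(n-6)²[(n-4)(n-5)(b-1)² - (n-3)b²]`. -/
theorem charpoly_R_nonbase_cut (n b : ℕ) (hn : 4 ≤ n) (hb : 2 ≤ b)
    (RNc : Matrix ((Fin b × Fin (n - 3)) ⊕ Unit) ((Fin b × Fin (n - 3)) ⊕ Unit) ℝ)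
    (hRNc₁ : ∀ (k k' : Fin b) (i j : Fin (n - 3)),
      RNc (Sum.inl (k, i)) (Sum.inl (k', j)) =
        if k = k' then
          (if i = j then (b : ℝ) * ((n : ℝ) - 6) + ((b : ℝ) - (n : ℝ) + 5)
           else (b : ℝ) - (n : ℝ) + 5)
        else -((n : ℝ) - 5))
    (hRNc₂ : ∀ (k : Fin b) (i : Fin (n - 3)),
      RNc (Sum.inl (k, i)) (Sum.inr ()) = -((b : ℝ) * ((n : ℝ) - 6)))
    (hRNc₃ : ∀ (k : Fin b) (i : Fin (n - 3)),
      RNc (Sum.inr ()) (Sum.inl (k, i)) = -((b : ℝ) * ((n : ℝ) - 6)))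
    (hRNc₄ : RNc (Sum.inr ()) (Sum.inr ()) =
      -(((n : ℝ) - 5) * ((n : ℝ) - 6) * ((b : ℝ) - 1) ^ 2)) :
    RNc.charpoly =
      (X - C ((2 * (n : ℝ) - 9) * (b : ℝ))) ^ (b - 1)
        * (X - C (((n : ℝ) - 6) * (b : ℝ))) ^ ((n - 4) * b)
        * (X ^ 2
            + C (((n : ℝ) - 6) * (((n : ℝ) - 5) * ((b : ℝ) - 1) ^ 2
                + ((n : ℝ) - 4) * (b : ℝ))) * X
            + C ((b : ℝ) * ((n : ℝ) - 6) ^ 2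
                * (((n : ℝ) - 4) * ((n : ℝ) - 5) * ((b : ℝ) - 1) ^ 2
                  - ((n : ℝ) - 3) * (b : ℝ) ^ 2))) := by
  haveI : NeZero b := ⟨by omega⟩
  haveI : NeZero (n - 3) := ⟨by omega⟩
  have h3n : (3 : ℕ) ≤ n := by omega
  have hcast : ((n - 3 : ℕ) : ℝ) = (n : ℝ) - 3 := by
    push_cast [h3n]; ring
  have hR : RNc = Mgen b (n-3) ((b:ℝ)*((n:ℝ)-6)) (b:ℝ) (-((n:ℝ)-5))
      (-((b:ℝ)*((n:ℝ)-6))) (-((b:ℝ)*((n:ℝ)-6)))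
      (-(((n:ℝ)-5)*((n:ℝ)-6)*((b:ℝ)-1)^2)) := by
    ext x y
    rcases x with ⟨k, i⟩ | u <;> rcases y with ⟨l, j⟩ | u'
    · rw [hRNc₁]
      simp only [Mgen, Matrix.fromBlocks_apply₁₁, Matrix.of_apply, Prod.mk.injEq]
      rcases eq_or_ne k l with hkl | hkl
      · subst hkl
        rcases eq_or_ne i j with hij | hij
        · subst hij; simp; try ring
        · simp [hij]; try ring
      · simp [hkl]; try ring
    · cases u'; rw [hRNc₂]; simp [Mgen]
    · cases u; rw [hRNc₃]; simp [Mgen]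
    · cases u; cases u'; rw [hRNc₄]; simp [Mgen]
  rw [hR]
  rw [charpoly_similar _
      (Dgen b (n-3) ((b:ℝ)*((n:ℝ)-6)) (b:ℝ) (-((n:ℝ)-5))
        (-((b:ℝ)*((n:ℝ)-6))) (-((b:ℝ)*((n:ℝ)-6)))
        (-(((n:ℝ)-5)*((n:ℝ)-6)*((b:ℝ)-1)^2)))
      (Qmat b (n-3)) (Qinv b (n-3)) (Qmat_mul_Qinv b (n-3))
      (Mgen_mul_Qmat b (n-3) _ _ _ _ _ _)]
  rw [charpoly_Dgen]
  rw [hcast]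
  have e3 : n - 3 - 1 = n - 4 := by omega
  rw [e3]
  simp only [C_add, C_sub, C_neg, C_mul, C_pow, map_ofNat, C_1]
  ring
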